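/- Let Z = {0,1}^ℕ with ultrametrics ρ₁(x,y) = f(inf{j : x_j ≠ y_j}) and ρ₂(x,y) = g(inf{j : x_j ≠ y_j}), where f,g: ℕ → (0,∞) are strictly decreasing with limit 0. Then the entropic scale of the bimetric space (Z,ρ₁,ρ₂) satisfies s(Z,α) = g(⌊inf_{k∈ℕ}(k + (α/ln 2)·f(k))⌋), and the diametric scale satisfies s₀(Z,α) = sup_{k∈ℕ} g(k)·e^{-α f(k)}. -/

import Mathlib

open Metric MeasureTheory ENNReal Set

noncomputable def pack {Z : Type*} (ρ : Z → Z → ℝ) (B : Set Z) (ε : ℝ) : ℝ≥0∞ :=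
  ⨆ (N : Finset Z) (_ : ↑N ⊆ B ∧ (↑N : Set Z).Pairwise fun a b => ε < ρ a b),
    (N.card : ℝ≥0∞)

def mball {Z : Type*} (ρ : Z → Z → ℝ) (x : Z) (r : ℝ) : Set Z := {y | ρ x y ≤ r}

noncomputable def entScale {Z : Type*} (ρ₁ ρ₂ : Z → Z → ℝ) (α : ℝ) : ℝ :=
  sInf {s : ℝ | 0 < s ∧ ∀ x : Z, ∀ r : ℝ, 0 < r →
    pack ρ₂ (mball ρ₁ x r) s ≤ ENNReal.ofReal (Real.exp (α * r))}

noncomputable def diamScale {Z : Type*} (ρ₁ ρ₂ : Z → Z → ℝ) (α : ℝ) : ℝ :=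
  sInf {s : ℝ | 0 < s ∧ ∀ x : Z, ∀ r : ℝ, 0 < r →
    ∀ y ∈ mball ρ₁ x r, ∀ z ∈ mball ρ₁ x r, ρ₂ y z ≤ Real.exp (α * r) * s}

noncomputable def dblScale {Z : Type*} (ρ : Z → Z → ℝ) (α : ℝ) : ℝ :=
  sInf {s : ℝ | 0 < s ∧ ∀ x : Z,
    pack ρ (mball ρ x (2 * s)) s ≤ ENNReal.ofReal (Real.exp (2 * α * s))}

noncomputable def outScale {Z : Type*} (ρ : Z → Z → ℝ) (α : ℝ) : ℝ :=
  sInf {t : ℝ | ∃ γ : ℝ, 0 < γ ∧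
    t = γ + (1 / α) * Real.log (pack ρ Set.univ γ).toReal}

def IsMetric {Z : Type*} (ρ : Z → Z → ℝ) : Prop :=
  (∀ x y, ρ x y = 0 ↔ x = y) ∧ (∀ x y, ρ x y = ρ y x) ∧
    ∀ x y z, ρ x z ≤ ρ x y + ρ y z

def IsUltrametric' {Z : Type*} (ρ : Z → Z → ℝ) : Prop :=
  ∀ x y z, ρ x z ≤ max (ρ x y) (ρ y z)

def MetricPrivate {Z : Type*} [MeasurableSpace Z] (ρ₁ : Z → Z → ℝ) (α : ℝ)
    (M : Z → Measure Z) : Prop :=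
  (∀ x, IsProbabilityMeasure (M x)) ∧
    ∀ x x' : Z, ∀ S : Set Z,
      M x S ≤ ENNReal.ofReal (Real.exp (α * ρ₁ x x')) * M x' S

noncomputable def accuracy {Z : Type*} [MeasurableSpace Z] (ρ₁ ρ₂ : Z → Z → ℝ)
    (α : ℝ) : ℝ≥0∞ :=
  ⨅ (M : Z → Measure Z) (_ : MetricPrivate ρ₁ α M),
    ⨆ x : Z, ∫⁻ y, ENNReal.ofReal (ρ₂ y x) ∂(M x)

noncomputable def dEntScale (Z : Type*) [MetricSpace Z] (α : ℝ) : ℝ :=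
  entScale (fun a b : Z => dist a b) (fun a b : Z => dist a b) α

open Classical in
noncomputable def seqMetric (f : ℕ → ℝ) (x y : ℕ → Bool) : ℝ :=
  if x = y then 0 else f (sInf {j : ℕ | x j ≠ y j})

namespace Stmt18Aux

noncomputable def fd (x y : ℕ → Bool) : ℕ := sInf {j | x j ≠ y j}

lemma fd_spec {x y : ℕ → Bool} (h : x ≠ y) : x (fd x y) ≠ y (fd x y) := by
  apply Nat.sInf_mem (s := {j | x j ≠ y j})
  by_contra hc
  rw [Set.not_nonempty_iff_eq_empty] at hc
  apply h; funext j
  by_contra hj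
  have hj' : j ∈ {j | x j ≠ y j} := hj
  rw [hc] at hj'
  exact Set.notMem_empty j hj'

lemma eq_of_lt_fd {x y : ℕ → Bool} {j : ℕ} (h : j < fd x y) : x j = y j := by
  by_contra hc
  exact absurd (Nat.sInf_le (hc : j ∈ {j | x j ≠ y j})) (Nat.not_le.2 h)

lemma seqMetric_self (f : ℕ → ℝ) (x : ℕ → Bool) : seqMetric f x x = 0 := by
  simp [seqMetric]

lemma seqMetric_ne (f : ℕ → ℝ) {x y : ℕ → Bool} (h : x ≠ y) :
    seqMetric f x y = f (fd x y) := by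
  simp [seqMetric, h, fd]

def cyl (x : ℕ → Bool) (k : ℕ) : Set (ℕ → Bool) := {y | ∀ j < k, y j = x j}

lemma exists_le (f : ℕ → ℝ) (hf0 : Filter.Tendsto f Filter.atTop (nhds 0)) {r : ℝ}
    (hr : 0 < r) : {k : ℕ | f k ≤ r}.Nonempty := by
  obtain ⟨k, hk⟩ := (hf0.eventually (gt_mem_nhds hr)).exists
  exact ⟨k, hk.le⟩

lemma mball_eq (f : ℕ → ℝ) (hf : StrictAnti f)
    (hf0 : Filter.Tendsto f Filter.atTop (nhds 0)) (x : ℕ → Bool) {r : ℝ} (hr : 0 < r) :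
    mball (seqMetric f) x r = cyl x (sInf {k | f k ≤ r}) := by
  have hne := exists_le f hf0 hr
  ext y
  rcases eq_or_ne x y with rfl | h
  · simp [mball, cyl, seqMetric_self, hr.le]
  constructor
  · intro hy j hj
    rw [mball, Set.mem_setOf_eq, seqMetric_ne f h] at hy
    have hfd : sInf {k | f k ≤ r} ≤ fd x y := by
      by_contra hc
      push_neg at hc
      exact absurd (Nat.sInf_le (hy : fd x y ∈ {k | f k ≤ r})) (Nat.not_le.2 hc)
    exact (eq_of_lt_fd (lt_of_lt_of_le hj hfd)).symm
  · intro hy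
    rw [mball, Set.mem_setOf_eq, seqMetric_ne f h]
    have hfd : sInf {k | f k ≤ r} ≤ fd x y := by
      by_contra hc
      push_neg at hc
      exact fd_spec h (hy _ hc).symm
    calc f (fd x y) ≤ f (sInf {k | f k ≤ r}) := hf.antitone hfd
      _ ≤ r := Nat.sInf_mem hne

lemma sInf_index_self (f : ℕ → ℝ) (hf : StrictAnti f) (k : ℕ) :
    sInf {j | f j ≤ f k} = k := by
  refine le_antisymm (Nat.sInf_le (le_refl (f k))) (le_csInf ⟨k, le_refl (f k)⟩ ?_)
  intro m hm
  exact (hf.le_iff_ge).mp hm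

lemma pack_cyl_le (g : ℕ → ℝ) (hg : StrictAnti g) {s : ℝ}
    (hne : {j : ℕ | g j ≤ s}.Nonempty) (x : ℕ → Bool) (k : ℕ) :
    pack (seqMetric g) (cyl x k) s ≤ 2 ^ (sInf {j : ℕ | g j ≤ s} - k) := by
  set k₀ := sInf {j : ℕ | g j ≤ s} with hk₀
  refine iSup₂_le fun N hN => ?_
  obtain ⟨hsub, hpair⟩ := hN
  have hinj : Set.InjOn (fun y : ℕ → Bool => fun i : Fin (k₀ - k) => y (k + i)) ↑N := by
    intro y hy z hz hyz
    by_contra hne'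
    have hlt : s < seqMetric g y z := hpair hy hz hne'
    rw [seqMetric_ne g hne'] at hlt
    have hfd : k₀ ≤ fd y z := by
      by_contra hc
      push_neg at hc
      apply fd_spec hne'
      rcases lt_or_ge (fd y z) k with h1 | h1
      · rw [hsub hy _ h1, hsub hz _ h1]
      · have h2 : fd y z - k < k₀ - k := by omega
        have := congrFun hyz ⟨fd y z - k, h2⟩
        simpa [Nat.add_sub_cancel' h1] using this
    have : g (fd y z) ≤ s := le_trans (hg.antitone hfd) (Nat.sInf_mem hne)
    exact absurd this (not_le.2 hlt)
  have hcard : N.card ≤ 2 ^ (k₀ - k) := by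
    have := Finset.card_le_card_of_injOn
      (fun y : ℕ → Bool => fun i : Fin (k₀ - k) => y (k + i))
      (fun a _ => Finset.mem_univ _) hinj
    simpa using this
  exact_mod_cast Nat.cast_le.mpr hcard

lemma le_pack_cyl (g : ℕ → ℝ) {s : ℝ} (x : ℕ → Bool) {k : ℕ}
    (hk : k < sInf {j : ℕ | g j ≤ s}) :
    (2 : ℝ≥0∞) ^ (sInf {j : ℕ | g j ≤ s} - k) ≤ pack (seqMetric g) (cyl x k) s := by
  classical
  set k₀ := sInf {j : ℕ | g j ≤ s} with hk₀
  set d := k₀ - k with hd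
  set ψ : (Fin d → Bool) → (ℕ → Bool) := fun b j =>
    if h : k ≤ j ∧ j - k < d then b ⟨j - k, h.2⟩ else x j with hψ
  have key : ∀ (b : Fin d → Bool) (i : Fin d), ψ b (k + i) = b i := by
    intro b i
    have h : k ≤ k + (i : ℕ) ∧ (k + (i : ℕ)) - k < d := ⟨Nat.le_add_right _ _, by simpa using i.2⟩
    simp only [hψ, dif_pos h]
    congr 1
    exact Fin.ext (by simp)
  have hinj : Function.Injective ψ := by
    intro b b' hbb
    funext i
    rw [← key b i, ← key b' i, hbb]
  have hmem : ∀ b, ψ b ∈ cyl x k := by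
    intro b j hj
    simp only [hψ]
    rw [dif_neg fun h => absurd hj (not_lt.2 h.1)]
  have hoff : ∀ (b : Fin d → Bool) (j : ℕ), ¬(k ≤ j ∧ j - k < d) → ψ b j = x j := by
    intro b j h
    simp only [hψ]
    rw [dif_neg h]
  set N : Finset (ℕ → Bool) := (Finset.univ : Finset (Fin d → Bool)).image ψ with hN
  have hsub : ↑N ⊆ cyl x k := by
    intro y hy
    simp only [hN, Finset.coe_image, Set.mem_image] at hy
    obtain ⟨b, _, rfl⟩ := hy
    exact hmem b
  have hpair : (↑N : Set (ℕ → Bool)).Pairwise fun a b => s < seqMetric g a b := by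
    intro y hy z hz hyz
    rw [seqMetric_ne g hyz]
    simp only [hN, Finset.coe_image, Set.mem_image] at hy hz
    obtain ⟨b, _, rfl⟩ := hy
    obtain ⟨b', _, rfl⟩ := hz
    have hfdlt : fd (ψ b) (ψ b') < k₀ := by
      by_contra hc
      push_neg at hc
      apply fd_spec hyz
      have hnot : ¬(k ≤ fd (ψ b) (ψ b') ∧ fd (ψ b) (ψ b') - k < d) := by omega
      rw [hoff b _ hnot, hoff b' _ hnot]
    have : fd (ψ b) (ψ b') ∉ {j : ℕ | g j ≤ s} := Nat.notMem_of_lt_sInf hfdlt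
    exact not_le.1 this
  have hcard : N.card = 2 ^ d := by
    rw [hN, Finset.card_image_of_injective _ hinj]
    simp
  calc (2 : ℝ≥0∞) ^ d = (N.card : ℝ≥0∞) := by rw [hcard]; push_cast; ring
    _ ≤ pack (seqMetric g) (cyl x k) s := le_iSup₂ (f := fun (N : Finset (ℕ → Bool))
        (_ : ↑N ⊆ cyl x k ∧ (↑N : Set (ℕ → Bool)).Pairwise fun a b => s < seqMetric g a b) =>
        (N.card : ℝ≥0∞)) N ⟨hsub, hpair⟩

end Stmt18Aux

open Stmt18Aux

theorem stmt18 (f g : ℕ → ℝ) (hfpos : ∀ k, 0 < f k) (hgpos : ∀ k, 0 < g k)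
    (hf : StrictAnti f) (hg : StrictAnti g)
    (hf0 : Filter.Tendsto f Filter.atTop (nhds 0))
    (hg0 : Filter.Tendsto g Filter.atTop (nhds 0))
    (α : ℝ) (hα : 0 < α) :
    entScale (seqMetric f) (seqMetric g) α =
        g (⌊⨅ k : ℕ, ((k : ℝ) + (α / Real.log 2) * f k)⌋₊) ∧
      diamScale (seqMetric f) (seqMetric g) α =
        ⨆ k : ℕ, g k * Real.exp (-(α * f k)) := by
  have hlog2 : (0:ℝ) < Real.log 2 := Real.log_pos (by norm_num)
  set c := α / Real.log 2 with hc
  have hcpos : 0 < c := div_pos hα hlog2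
  have hcmul : ∀ t : ℝ, c * t * Real.log 2 = α * t := by
    intro t; rw [hc]; field_simp
  constructor
  · -- entScale
    set I := ⨅ k : ℕ, ((k : ℝ) + c * f k) with hI
    have hIbdd : BddBelow (Set.range fun k : ℕ => ((k : ℝ) + c * f k)) := by
      refine ⟨0, ?_⟩
      rintro _ ⟨k, rfl⟩
      exact add_nonneg (Nat.cast_nonneg k) (mul_nonneg hcpos.le (hfpos k).le)
    have hI0 : 0 ≤ I :=
      le_ciInf fun k => add_nonneg (Nat.cast_nonneg k) (mul_nonneg hcpos.le (hfpos k).le)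
    set K := ⌊I⌋₊ with hK
    have hKI : (K : ℝ) ≤ I := Nat.floor_le hI0
    have hgKpos := hgpos K
    have hset : {s : ℝ | 0 < s ∧ ∀ x : (ℕ → Bool), ∀ r : ℝ, 0 < r →
        pack (seqMetric g) (mball (seqMetric f) x r) s ≤ ENNReal.ofReal (Real.exp (α * r))}
        = Set.Ici (g K) := by
      ext s
      simp only [Set.mem_setOf_eq, Set.mem_Ici]
      constructor
      · rintro ⟨hs, hval⟩
        by_contra hcon
        push_neg at hcon
        have hne : {j : ℕ | g j ≤ s}.Nonempty := exists_le g hg0 hs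
        set k₀ := sInf {j : ℕ | g j ≤ s} with hk₀
        have hKk₀ : K < k₀ := by
          by_contra h
          push_neg at h
          exact absurd (le_trans (hg.antitone h) (Nat.sInf_mem hne)) (not_le.2 hcon)
        have hcast1 : ((K : ℝ) + 1) ≤ (k₀ : ℝ) := by exact_mod_cast Nat.succ_le_of_lt hKk₀
        have hIlt : I < (k₀ : ℝ) := lt_of_lt_of_le (Nat.lt_floor_add_one I) hcast1
        obtain ⟨k, hkI⟩ := exists_lt_of_ciInf_lt hIlt
        have hkI' : (k : ℝ) + c * f k < (k₀ : ℝ) := hkI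
        have hkk₀ : k < k₀ := by
          have h1 : (k : ℝ) < (k₀ : ℝ) :=
            lt_of_le_of_lt (le_add_of_nonneg_right (mul_nonneg hcpos.le (hfpos k).le)) hkI'
          exact_mod_cast h1
        have hball := hval (fun _ => false) (f k) (hfpos k)
        rw [mball_eq f hf hf0 _ (hfpos k), sInf_index_self f hf] at hball
        have hge := le_pack_cyl g (fun _ => false) hkk₀
        have h2 : (2 : ℝ≥0∞) ^ (k₀ - k) ≤ ENNReal.ofReal (Real.exp (α * f k)) :=
          le_trans hge hball
        rw [show (2 : ℝ≥0∞) ^ (k₀ - k) = ENNReal.ofReal ((2:ℝ) ^ (k₀ - k)) by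
              rw [ENNReal.ofReal_pow (by norm_num)]; norm_num] at h2
        rw [ENNReal.ofReal_le_ofReal_iff (Real.exp_pos _).le] at h2
        have hlog := Real.log_le_log (by positivity) h2
        rw [Real.log_pow, Real.log_exp] at hlog
        have hcast2 : ((k₀ - k : ℕ) : ℝ) = (k₀ : ℝ) - k := by
          rw [Nat.cast_sub hkk₀.le]
        rw [hcast2] at hlog
        have h4 : ((k₀:ℝ) - k) * Real.log 2 ≤ c * f k * Real.log 2 := by
          rw [hcmul]; exact hlog
        have h5 : (k₀:ℝ) - k ≤ c * f k := le_of_mul_le_mul_right h4 hlog2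
        linarith
      · intro hge
        have hs : 0 < s := lt_of_lt_of_le hgKpos hge
        refine ⟨hs, fun x r hr => ?_⟩
        have hne : {j : ℕ | g j ≤ s}.Nonempty := ⟨K, hge⟩
        have hk₀K : sInf {j : ℕ | g j ≤ s} ≤ K := Nat.sInf_le hge
        rw [mball_eq f hf hf0 x hr]
        set k := sInf {j : ℕ | f j ≤ r} with hk
        have hfk : f k ≤ r := Nat.sInf_mem (exists_le f hf0 hr)
        refine le_trans (pack_cyl_le g hg hne x k) ?_
        refine le_trans (pow_le_pow_right₀ (by norm_num) (Nat.sub_le_sub_right hk₀K k)) ?_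
        have hreal : (2:ℝ) ^ (K - k) ≤ Real.exp (α * r) := by
          rcases le_or_gt K k with h | h
          · rw [Nat.sub_eq_zero_of_le h, pow_zero]
            exact Real.one_le_exp (mul_nonneg hα.le (lt_of_lt_of_le (hfpos k) hfk).le)
          · have hcast : ((K - k : ℕ) : ℝ) = (K : ℝ) - k := by
              rw [Nat.cast_sub h.le]
            have hIk : I ≤ (k:ℝ) + c * f k := ciInf_le hIbdd k
            have hKk : ((K - k : ℕ) : ℝ) ≤ c * f k := by
              rw [hcast]; linarith
            have h1 : ((K - k:ℕ):ℝ) * Real.log 2 ≤ α * r :=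
              calc ((K - k:ℕ):ℝ) * Real.log 2 ≤ (c * f k) * Real.log 2 :=
                    mul_le_mul_of_nonneg_right hKk hlog2.le
                _ = α * f k := hcmul (f k)
                _ ≤ α * r := mul_le_mul_of_nonneg_left hfk hα.le
            calc (2:ℝ) ^ (K - k) = Real.exp (((K-k:ℕ):ℝ) * Real.log 2) := by
                  rw [Real.exp_nat_mul, Real.exp_log (by norm_num)]
              _ ≤ Real.exp (α * r) := Real.exp_le_exp.2 h1
        calc (2 : ℝ≥0∞) ^ (K - k) = ENNReal.ofReal ((2:ℝ) ^ (K - k)) := by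
              rw [ENNReal.ofReal_pow (by norm_num)]; norm_num
          _ ≤ ENNReal.ofReal (Real.exp (α * r)) := ENNReal.ofReal_le_ofReal hreal
    unfold entScale
    rw [hset, csInf_Ici]
  · -- diamScale
    set S := ⨆ k : ℕ, g k * Real.exp (-(α * f k)) with hS
    have hbdd : BddAbove (Set.range fun k : ℕ => g k * Real.exp (-(α * f k))) := by
      refine ⟨g 0, ?_⟩
      rintro _ ⟨k, rfl⟩
      calc g k * Real.exp (-(α * f k)) ≤ g k * 1 :=
            mul_le_mul_of_nonneg_left
              (Real.exp_le_one_iff.2 (neg_nonpos.2 (mul_nonneg hα.le (hfpos k).le))) (hgpos k).le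
        _ = g k := mul_one _
        _ ≤ g 0 := hg.antitone (Nat.zero_le k)
    have hterm : ∀ k, g k * Real.exp (-(α * f k)) ≤ S := fun k => le_ciSup hbdd k
    have hS0 : 0 < S :=
      lt_of_lt_of_le (mul_pos (hgpos 0) (Real.exp_pos _)) (hterm 0)
    have hset : {s : ℝ | 0 < s ∧ ∀ x : (ℕ → Bool), ∀ r : ℝ, 0 < r →
        ∀ y ∈ mball (seqMetric f) x r, ∀ z ∈ mball (seqMetric f) x r,
          seqMetric g y z ≤ Real.exp (α * r) * s} = Set.Ici S := by
      ext s
      simp only [Set.mem_setOf_eq, Set.mem_Ici]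
      constructor
      · rintro ⟨hs, hval⟩
        refine ciSup_le fun k => ?_
        set x : ℕ → Bool := fun _ => false with hx
        set z : ℕ → Bool := fun j => decide (j = k) with hz
        have hxz : x ≠ z := by
          intro h
          have := congrFun h k
          simp [hx, hz] at this
        have hsetxz : {j : ℕ | x j ≠ z j} = {k} := by
          ext j
          simp [hx, hz]
        have hfd : fd x z = k := by
          rw [fd, hsetxz, csInf_singleton]
        have hmem1 : x ∈ mball (seqMetric f) x (f k) := by
          simp [mball, seqMetric_self, (hfpos k).le]
        have hmem2 : z ∈ mball (seqMetric f) x (f k) := by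
          show seqMetric f x z ≤ f k
          rw [seqMetric_ne f hxz, hfd]
        have hv := hval x (f k) (hfpos k) x hmem1 z hmem2
        rw [seqMetric_ne g hxz, hfd] at hv
        rw [Real.exp_neg, ← div_eq_mul_inv, div_le_iff₀ (Real.exp_pos _)]
        calc g k ≤ Real.exp (α * f k) * s := hv
          _ = s * Real.exp (α * f k) := mul_comm _ _
      · intro hge
        have hs : 0 < s := lt_of_lt_of_le hS0 hge
        refine ⟨hs, fun x r hr y hy z hz => ?_⟩
        rcases eq_or_ne y z with rfl | hyz
        · rw [seqMetric_self]
          positivity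
        rw [mball_eq f hf hf0 x hr] at hy hz
        set k := sInf {j : ℕ | f j ≤ r} with hk
        have hfk : f k ≤ r := Nat.sInf_mem (exists_le f hf0 hr)
        have hfdk : k ≤ fd y z := by
          by_contra hcon
          push_neg at hcon
          exact fd_spec hyz ((hy _ hcon).trans (hz _ hcon).symm)
        rw [seqMetric_ne g hyz]
        have h1 : g (fd y z) ≤ g k := hg.antitone hfdk
        have h2 : g k ≤ Real.exp (α * f k) * s := by
          have h3 : g k * Real.exp (-(α * f k)) ≤ s := le_trans (hterm k) hge
          rw [Real.exp_neg, ← div_eq_mul_inv, div_le_iff₀ (Real.exp_pos _)] at h3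
          calc g k ≤ s * Real.exp (α * f k) := h3
            _ = Real.exp (α * f k) * s := mul_comm _ _
        have h4 : Real.exp (α * f k) * s ≤ Real.exp (α * r) * s :=
          mul_le_mul_of_nonneg_right
            (Real.exp_le_exp.2 (mul_le_mul_of_nonneg_left hfk hα.le)) hs.le
        linarith
    unfold diamScale
    rw [hset, csInf_Ici]
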